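/- Let T be an odd positive integer, c an integer with c ≥ 0, α, ρ real with |α| < 1/2 and |ρ| ≤ (T−1)/(2T), γ real with 0 < γ ≤ T, δ real with |δ| ≤ 1, β ≤ 0 real, and d ∈ 1/2 + ℤ. There is a constant C = C(c,d,T,α,β,γ,δ,ρ) > 0 such that in the circle-method setup: |∫_{−ϑ'}^{ϑ''} z^d·e^{(πz/k)(2n+δ)}·e^{βπ/(kz)}·𝓗_{c,T}(α,γ,ρ,k;z) dφ| ≤ C·(1/(k√n))·(n/k)^{|d|}. -/

import Mathlib

open Complex Real MeasureTheory

noncomputable def mordellH' (T c : ℕ) (α γ ρ : ℝ) (k : ℕ) (z : ℂ) : ℂ :=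
  ∫ x : ℝ, ((x : ℂ) + I * ρ) ^ c *
      Complex.exp (-(π : ℂ) * T * x ^ 2 / (γ ^ 2 * k * z) + 2 * π * x * α) /
    Complex.cosh (π * ((x : ℂ) + I * ρ))

lemma integrable_exp_quad (a b : ℝ) (ha : 0 < a) :
    Integrable (fun x : ℝ => Real.exp (-a * x ^ 2 + b * x)) := by
  have h := ((integrable_exp_neg_mul_sq ha).comp_sub_right (b / (2 * a))).const_mul
      (Real.exp (b ^ 2 / (4 * a)))
  refine h.congr ?_
  filter_upwards with x
  rw [← Real.exp_add]
  congr 1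
  field_simp
  ring

noncomputable def HBoundFn (T c : ℕ) (γ ρ : ℝ) (x : ℝ) : ℝ :=
  (Real.exp (c * |ρ|) / Real.cos (π * ρ)) *
    (Real.exp (-(π * T / (5 * γ ^ 2)) * x ^ 2 + ((c : ℝ) + π) * x) +
     Real.exp (-(π * T / (5 * γ ^ 2)) * x ^ 2 + -((c : ℝ) + π) * x))

lemma integrable_HBoundFn (T c : ℕ) (hT : 0 < T) (γ ρ : ℝ) (hγ : 0 < γ) :
    Integrable (HBoundFn T c γ ρ) := by
  have ha : 0 < π * T / (5 * γ ^ 2) := by positivity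
  exact ((integrable_exp_quad _ _ ha).add (integrable_exp_quad _ _ ha)).const_mul _

lemma HBoundFn_nonneg (T c : ℕ) (γ ρ : ℝ) (hρ : |ρ| < 1 / 2) (x : ℝ) :
    0 ≤ HBoundFn T c γ ρ x := by
  have hcosπρ : 0 < Real.cos (π * ρ) := by
    apply Real.cos_pos_of_mem_Ioo
    constructor <;> nlinarith [abs_lt.mp hρ, Real.pi_pos]
  unfold HBoundFn
  positivity

set_option maxHeartbeats 1000000 in
lemma mordellH'_bound (T c : ℕ) (hTpos : 0 < T) (α γ ρ : ℝ) (hα : |α| < 1 / 2)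
    (hγ : 0 < γ) (hρ : |ρ| < 1 / 2) (k : ℕ) (hk : 1 ≤ k) (z : ℂ)
    (hz5 : (k : ℝ) / 5 ≤ z⁻¹.re) :
    ‖mordellH' T c α γ ρ k z‖ ≤ ∫ x : ℝ, HBoundFn T c γ ρ x := by
  have hkR : (0:ℝ) < k := by exact_mod_cast hk
  have hcosπρ : 0 < Real.cos (π * ρ) := by
    apply Real.cos_pos_of_mem_Ioo
    constructor <;> nlinarith [abs_lt.mp hρ, Real.pi_pos]
  rw [mordellH']
  refine MeasureTheory.norm_integral_le_of_norm_le (integrable_HBoundFn T c hTpos γ ρ hγ) ?_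
  filter_upwards with x
  set a : ℝ := π * T / (5 * γ ^ 2) with ha_def
  have ha : 0 < a := by positivity
  -- cosh lower bound
  have hcosh_re : (Complex.cosh ((π : ℂ) * ((x : ℂ) + I * ρ))).re
      = Real.cosh (π * x) * Real.cos (π * ρ) := by
    have h1 : (π : ℂ) * ((x : ℂ) + I * ρ) = ((π * x : ℝ) : ℂ) + ((π * ρ : ℝ) : ℂ) * I := by
      push_cast; ring
    rw [h1, Complex.cosh_add, Complex.cosh_mul_I, Complex.sinh_mul_I]
    simp only [Complex.add_re, Complex.mul_re, Complex.I_re, Complex.I_im,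
      Complex.cosh_ofReal_re, Complex.cosh_ofReal_im, Complex.cos_ofReal_re,
      Complex.cos_ofReal_im, Complex.sinh_ofReal_re, Complex.sinh_ofReal_im,
      Complex.sin_ofReal_re, Complex.sin_ofReal_im]
    ring
  have hcosh : Real.cos (π * ρ) ≤ ‖Complex.cosh ((π : ℂ) * ((x : ℂ) + I * ρ))‖ := by
    refine le_trans ?_ (le_trans (le_abs_self _) (Complex.abs_re_le_norm _))
    rw [hcosh_re]
    nlinarith [Real.one_le_cosh (π * x)]
  -- numerator pow bound
  have habs_xρ : ‖(x : ℂ) + I * ρ‖ ≤ |x| + |ρ| := by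
    calc ‖(x : ℂ) + I * ρ‖ ≤ ‖(x : ℂ)‖ + ‖I * ρ‖ :=
          norm_add_le _ _
    _ = |x| + |ρ| := by simp
  have hpow : ‖((x : ℂ) + I * ρ) ^ c‖ ≤ Real.exp (c * (|x| + |ρ|)) := by
    rw [norm_pow]
    calc ‖(x : ℂ) + I * ρ‖ ^ c ≤ (|x| + |ρ|) ^ c :=
          pow_le_pow_left₀ (norm_nonneg _) habs_xρ c
    _ ≤ Real.exp (|x| + |ρ|) ^ c := by
          apply pow_le_pow_left₀ (by positivity)
          nlinarith [Real.add_one_le_exp (|x| + |ρ|)]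
    _ = Real.exp (c * (|x| + |ρ|)) := by rw [Real.exp_nat_mul]
  -- exponent bound
  have hE : -(π : ℂ) * T * x ^ 2 / (γ ^ 2 * k * z) + 2 * π * x * α
      = ((-(π * T * x ^ 2) / (γ ^ 2 * k) : ℝ) : ℂ) * z⁻¹ + ((2 * π * x * α : ℝ) : ℂ) := by
    push_cast; ring
  have hEre : (-(π : ℂ) * T * x ^ 2 / (γ ^ 2 * k * z) + 2 * π * x * α).re
      ≤ -a * x ^ 2 + π * |x| := by
    rw [hE]
    simp only [Complex.add_re, Complex.re_ofReal_mul, Complex.ofReal_re]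
    have hr : -(π * T * x ^ 2) / (γ ^ 2 * k) ≤ 0 :=
      div_nonpos_of_nonpos_of_nonneg (neg_nonpos.mpr (by positivity)) (by positivity)
    have h1 : -(π * T * x ^ 2) / (γ ^ 2 * k) * z⁻¹.re ≤ -(π * T * x ^ 2) / (γ ^ 2 * k) * ((k:ℝ)/5) :=
      mul_le_mul_of_nonpos_left hz5 hr
    have h2 : -(π * T * x ^ 2) / (γ ^ 2 * k) * ((k:ℝ)/5) = -a * x ^ 2 := by
      rw [ha_def]; field_simp
    have h3 : 2 * π * x * α ≤ π * |x| := by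
      have hxα : x * α ≤ |x| * |α| := (le_abs_self _).trans_eq (abs_mul x α)
      have h4 : x * α ≤ |x| / 2 := by nlinarith [abs_nonneg x, hα]
      nlinarith [mul_le_mul_of_nonneg_left h4 Real.pi_pos.le]
    linarith [h2 ▸ h1]
  -- combine
  rw [norm_div, norm_mul, Complex.norm_exp]
  refine le_trans (div_le_div₀ (by positivity)
      (mul_le_mul hpow (Real.exp_le_exp.mpr hEre) (Real.exp_nonneg _) (by positivity))
      hcosπρ hcosh) ?_
  have heq : Real.exp (c * (|x| + |ρ|)) * Real.exp (-a * x ^ 2 + π * |x|) / Real.cos (π * ρ)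
      = Real.exp (c * |ρ|) / Real.cos (π * ρ) * Real.exp (-a * x ^ 2 + ((c:ℝ) + π) * |x|) := by
    rw [← Real.exp_add, div_mul_eq_mul_div, ← Real.exp_add]
    congr 2
    ring
  rw [heq]
  unfold HBoundFn
  rw [← ha_def]
  refine mul_le_mul_of_nonneg_left ?_ (by positivity)
  rcases abs_cases x with ⟨h, _⟩ | ⟨h, _⟩
  · rw [h]
    exact le_add_of_nonneg_right (Real.exp_pos _).le
  · rw [h]
    have he : ((c:ℝ) + π) * -x = -((c:ℝ) + π) * x := by ring
    rw [he]
    exact le_add_of_nonneg_left (Real.exp_pos _).le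

set_option maxHeartbeats 4000000 in
/-- For `β ≤ 0`, the circle-method integral of `z^d·e^{(πz/k)(2n+δ)}·e^{βπ/(kz)}·𝓗_{c,T}`
is `O((1/(k√n))·(n/k)^{|d|})`. -/
theorem circle_integral_H_beta_nonpos (T : ℕ) (hT : Odd T) (hTpos : 0 < T)
    (c : ℕ) (α ρ : ℝ) (hα : |α| < 1 / 2) (hρ : |ρ| ≤ ((T : ℝ) - 1) / (2 * T))
    (γ : ℝ) (hγ : 0 < γ) (hγT : γ ≤ T) (δ : ℝ) (hδ : |δ| ≤ 1)
    (β : ℝ) (hβ : β ≤ 0) (d : ℝ) (hd : ∃ m : ℤ, d = m + 1 / 2) :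
    ∃ C > 0, ∀ n : ℕ, 2 ≤ n → ∀ k : ℕ, 1 ≤ k → k ≤ Nat.sqrt n →
      ∀ ϑ₁ ϑ₂ : ℝ,
        1 / (2 * k * (Nat.sqrt n : ℝ)) ≤ ϑ₁ → ϑ₁ ≤ 1 / (k * (Nat.sqrt n : ℝ)) →
        1 / (2 * k * (Nat.sqrt n : ℝ)) ≤ ϑ₂ → ϑ₂ ≤ 1 / (k * (Nat.sqrt n : ℝ)) →
        ‖
            (∫ φ : ℝ in (-ϑ₁)..ϑ₂,
              ((k : ℂ) / n - I * k * φ) ^ (d : ℂ) *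
                Complex.exp (π * ((k : ℂ) / n - I * k * φ) / k * (2 * n + δ)) *
                Complex.exp (β * π / (k * ((k : ℂ) / n - I * k * φ))) *
                mordellH' T c α γ ρ k ((k : ℂ) / n - I * k * φ))‖ ≤
          C * (1 / (k * Real.sqrt n)) * ((n : ℝ) / k) ^ |d| := by
  have hT1 : (1:ℝ) ≤ T := by exact_mod_cast hTpos
  have hρ' : |ρ| < 1 / 2 := by
    refine lt_of_le_of_lt hρ ?_
    rw [div_lt_div_iff₀ (by positivity) (by norm_num)]
    nlinarith
  set M := ∫ x : ℝ, HBoundFn T c γ ρ x with hM_def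
  have hM0 : 0 ≤ M := integral_nonneg (fun x => HBoundFn_nonneg T c γ ρ hρ' x)
  clear_value M
  refine ⟨4 * 2 ^ |d| * Real.exp (3 * π) * (M + 1),
    mul_pos (by positivity) (by linarith), ?_⟩
  intro n hn k hk hkN ϑ₁ ϑ₂ hϑ₁l hϑ₁u hϑ₂l hϑ₂u
  set N := Nat.sqrt n with hN_def
  have hN1 : 1 ≤ N := by rw [hN_def]; exact Nat.le_sqrt.mpr (by omega)
  have hNsq' : (N:ℝ)^2 ≤ n := by exact_mod_cast Nat.sqrt_le' n
  have hnN' : (n:ℝ) < ((N:ℝ)+1)^2 := by exact_mod_cast Nat.lt_succ_sqrt' n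
  clear_value N
  have hNR : (1:ℝ) ≤ N := by exact_mod_cast hN1
  have hkR : (0:ℝ) < k := by exact_mod_cast hk
  have hn2 : (2:ℝ) ≤ n := by exact_mod_cast hn
  have hnR : (0:ℝ) < n := by linarith
  have hkNR : (k:ℝ) ≤ N := by exact_mod_cast hkN
  have hNsq : (N:ℝ) * N ≤ n := by nlinarith
  have hnN : (n:ℝ) < ((N:ℝ)+1) * ((N:ℝ)+1) := by nlinarith
  have hsqn : Real.sqrt n ≤ 2 * N := by
    rw [show (2*(N:ℝ)) = Real.sqrt ((2*N)^2) from (Real.sqrt_sq (by positivity)).symm]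
    apply Real.sqrt_le_sqrt
    nlinarith
  have hsq_pos : 0 < Real.sqrt n := Real.sqrt_pos.mpr hnR
  have hϑ₁pos : 0 < ϑ₁ := lt_of_lt_of_le (by positivity) hϑ₁l
  have hϑ₂pos : 0 < ϑ₂ := lt_of_lt_of_le (by positivity) hϑ₂l
  have hnk1 : (1:ℝ) ≤ (n:ℝ)/k := by rw [le_div_iff₀ hkR]; nlinarith
  set C₀ := 2 ^ |d| * ((n:ℝ)/k) ^ |d| * Real.exp (3*π) * M with hC₀
  have key : ∀ φ ∈ Set.uIoc (-ϑ₁) ϑ₂,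
      ‖((k : ℂ) / n - I * k * φ) ^ (d : ℂ) *
          Complex.exp (π * ((k : ℂ) / n - I * k * φ) / k * (2 * n + δ)) *
          Complex.exp (β * π / (k * ((k : ℂ) / n - I * k * φ))) *
          mordellH' T c α γ ρ k ((k : ℂ) / n - I * k * φ)‖ ≤ C₀ := by
    intro φ hφmem
    have hφ : |φ| ≤ 1/((k:ℝ)*N) := by
      rcases Set.mem_uIoc.mp hφmem with ⟨h1, h2⟩ | ⟨h1, h2⟩ <;>
        exact abs_le.mpr ⟨by linarith, by linarith⟩
    set z : ℂ := (k : ℂ) / n - I * k * φ with hz_def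
    have hz_eq : z = (((k:ℝ)/n : ℝ):ℂ) + ((-((k:ℝ)*φ) : ℝ):ℂ) * I := by
      rw [hz_def]; push_cast; ring
    have hre : z.re = (k:ℝ)/n := by rw [hz_eq]; simp
    have him : z.im = -((k:ℝ)*φ) := by rw [hz_eq]; simp
    have hz0 : z ≠ 0 := by
      intro h
      rw [h] at hre
      simp at hre
      have : (0:ℝ) < (k:ℝ)/n := by positivity
      rw [← hre] at this
      exact lt_irrefl 0 this
    have hkφ : (k:ℝ)*|φ| ≤ 1/N := by
      have := mul_le_mul_of_nonneg_left hφ hkR.le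
      calc (k:ℝ)*|φ| ≤ (k:ℝ)*(1/((k:ℝ)*N)) := this
      _ = 1/N := by field_simp
    have habs_le2 : ‖z‖ ≤ 2 := by
      refine le_trans (Complex.norm_le_abs_re_add_abs_im z) ?_
      rw [hre, him]
      have h1 : (k:ℝ)/n ≤ 1 := by rw [div_le_one hnR]; nlinarith
      have h2 : |(-((k:ℝ)*φ))| ≤ 1 := by
        rw [abs_neg, abs_mul, Nat.abs_cast]
        calc (k:ℝ)*|φ| ≤ 1/N := hkφ
        _ ≤ 1 := by rw [div_le_one (by linarith)]; linarith
      rw [_root_.abs_of_nonneg (show (0:ℝ) ≤ (k:ℝ)/n by positivity)]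
      linarith
    have habs_ge : (k:ℝ)/n ≤ ‖z‖ := by
      refine le_trans ?_ (Complex.abs_re_le_norm z)
      rw [hre]
      exact le_abs_self _
    have hnormsq : Complex.normSq z ≤ 5/n := by
      rw [Complex.normSq_apply, hre, him]
      rw [show (-((k:ℝ)*φ)) * (-((k:ℝ)*φ)) = ((k:ℝ)*|φ|)^2 from by
        rw [mul_pow, _root_.sq_abs]; ring]
      have e1 : ((k:ℝ)/n)*((k:ℝ)/n) ≤ 1/n := by
        rw [div_mul_div_comm, div_le_div_iff₀ (by positivity) hnR]
        have hkk : (k:ℝ)*k ≤ n :=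
          le_trans (mul_le_mul hkNR hkNR hkR.le (by positivity)) hNsq
        nlinarith [mul_le_mul_of_nonneg_right hkk hnR.le]
      have hkφ2 : ((k:ℝ)*|φ|)^2 ≤ (1/(N:ℝ))^2 := pow_le_pow_left₀ (by positivity) hkφ 2
      have e2 : (1/(N:ℝ))^2 ≤ 4/n := by
        rw [div_pow, div_le_div_iff₀ (by positivity) hnR]
        nlinarith
      exact le_trans (add_le_add e1 (hkφ2.trans e2)) (le_of_eq (by ring))
    have hns_pos : 0 < Complex.normSq z := Complex.normSq_pos.mpr hz0
    have hinv : (k:ℝ)/5 ≤ z⁻¹.re := by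
      rw [Complex.inv_re, hre, le_div_iff₀ hns_pos]
      calc (k:ℝ)/5 * Complex.normSq z ≤ (k:ℝ)/5 * (5/n) :=
            mul_le_mul_of_nonneg_left hnormsq (by positivity)
      _ = (k:ℝ)/n := by field_simp
    have h1 : ‖z ^ (d:ℂ)‖ ≤ 2 ^ |d| * ((n:ℝ)/k) ^ |d| := by
      rw [Complex.norm_cpow_of_ne_zero hz0]
      simp only [Complex.ofReal_re, Complex.ofReal_im, mul_zero, Real.exp_zero, div_one]
      rcases le_or_gt 0 d with hd0 | hd0
      · rw [_root_.abs_of_nonneg hd0]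
        calc ‖z‖ ^ d ≤ 2 ^ d := Real.rpow_le_rpow (norm_nonneg _) habs_le2 hd0
        _ ≤ 2^d * ((n:ℝ)/k)^d := by
            refine le_mul_of_one_le_right (by positivity) ?_
            rw [← Real.one_rpow d]
            exact Real.rpow_le_rpow zero_le_one hnk1 hd0
      · rw [_root_.abs_of_neg hd0]
        have h5 : ‖z‖ ^ d ≤ ((k:ℝ)/n) ^ d :=
          Real.rpow_le_rpow_of_nonpos (by positivity) habs_ge hd0.le
        have h6 : ((k:ℝ)/n) ^ d = ((n:ℝ)/k) ^ (-d) := by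
          rw [show (k:ℝ)/n = ((n:ℝ)/k)⁻¹ from (inv_div (n:ℝ) (k:ℝ)).symm,
            Real.inv_rpow (by positivity), ← Real.rpow_neg (by positivity)]
        refine h5.trans (h6 ▸ ?_)
        refine le_mul_of_one_le_left (by positivity) ?_
        rw [← Real.one_rpow (-d)]
        exact Real.rpow_le_rpow zero_le_one one_le_two (by linarith)
    have h2 : ‖Complex.exp (π * z / k * (2 * n + δ))‖ ≤ Real.exp (3*π) := by
      rw [Complex.norm_exp, Real.exp_le_exp]
      have hW : (π : ℂ) * z / k * (2*n+δ) = ((π/k*(2*n+δ) : ℝ):ℂ) * z := by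
        push_cast; ring
      rw [hW, Complex.re_ofReal_mul, hre]
      rw [show π/(k:ℝ)*(2*n+δ)*((k:ℝ)/n) = π*(2*(n:ℝ)+δ)/n from by field_simp]
      rw [div_le_iff₀ hnR]
      nlinarith [mul_le_mul_of_nonneg_left (show δ ≤ (n:ℝ) from by nlinarith [abs_le.mp hδ])
        Real.pi_pos.le]
    have h3 : ‖Complex.exp (β * π / (k * z))‖ ≤ 1 := by
      rw [Complex.norm_exp]
      have hW2 : (β : ℂ) * π / (k * z) = ((β*π/(k:ℝ) : ℝ):ℂ) * z⁻¹ := by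
        rw [div_eq_mul_inv, mul_inv]
        push_cast; ring
      rw [hW2, Complex.re_ofReal_mul]
      rw [show (1:ℝ) = Real.exp 0 from (Real.exp_zero).symm]
      refine Real.exp_le_exp.mpr ?_
      refine mul_nonpos_of_nonpos_of_nonneg ?_ (le_trans (by positivity) hinv)
      exact div_nonpos_of_nonpos_of_nonneg
        (mul_nonpos_of_nonpos_of_nonneg hβ Real.pi_pos.le) hkR.le
    have h4 : ‖mordellH' T c α γ ρ k z‖ ≤ M := by
      rw [hM_def]; exact mordellH'_bound T c hTpos α γ ρ hα hγ hρ' k hk z hinv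
    rw [norm_mul, norm_mul, norm_mul, hC₀]
    calc ‖z ^ (d:ℂ)‖ * ‖Complex.exp (π * z / k * (2 * n + δ))‖ *
          ‖Complex.exp (β * π / (k * z))‖ * ‖mordellH' T c α γ ρ k z‖
        ≤ (2 ^ |d| * ((n:ℝ)/k) ^ |d|) * Real.exp (3*π) * 1 * M := by
          refine mul_le_mul (mul_le_mul (mul_le_mul h1 h2 (norm_nonneg _)
            (by positivity)) h3 (norm_nonneg _) (by positivity)) h4
            (norm_nonneg _) ?_
          have : (0:ℝ) ≤ (2 ^ |d| * ((n:ℝ)/k) ^ |d|) * Real.exp (3*π) := by positivity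
          linarith
      _ = 2 ^ |d| * ((n:ℝ)/k) ^ |d| * Real.exp (3*π) * M := by ring
  have hC₀0 : 0 ≤ C₀ := by
    rw [hC₀]
    have : (0:ℝ) ≤ 2 ^ |d| * ((n:ℝ)/k) ^ |d| * Real.exp (3*π) := by positivity
    exact mul_nonneg this hM0
  have hlen : |ϑ₂ - (-ϑ₁)| ≤ 4/((k:ℝ)*Real.sqrt n) := by
    rw [abs_of_pos (by linarith)]
    have h2kN : 1/((k:ℝ)*N) ≤ 2/((k:ℝ)*Real.sqrt n) := by
      rw [div_le_div_iff₀ (by positivity) (by positivity)]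
      nlinarith
    have : ϑ₂ - (-ϑ₁) ≤ 2 * (1/((k:ℝ)*N)) := by linarith
    calc ϑ₂ - (-ϑ₁) ≤ 2 * (1/((k:ℝ)*N)) := this
    _ ≤ 2 * (2/((k:ℝ)*Real.sqrt n)) := by linarith
    _ = 4/((k:ℝ)*Real.sqrt n) := by ring
  calc ‖∫ φ : ℝ in (-ϑ₁)..ϑ₂,
          ((k : ℂ) / n - I * k * φ) ^ (d : ℂ) *
            Complex.exp (π * ((k : ℂ) / n - I * k * φ) / k * (2 * n + δ)) *
            Complex.exp (β * π / (k * ((k : ℂ) / n - I * k * φ))) *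
            mordellH' T c α γ ρ k ((k : ℂ) / n - I * k * φ)‖
      ≤ C₀ * |ϑ₂ - (-ϑ₁)| := intervalIntegral.norm_integral_le_of_norm_le_const key
    _ ≤ C₀ * (4/((k:ℝ)*Real.sqrt n)) := mul_le_mul_of_nonneg_left hlen hC₀0
    _ ≤ 4 * 2 ^ |d| * Real.exp (3 * π) * (M + 1) * (1 / ((k:ℝ) * Real.sqrt n)) *
          ((n : ℝ) / k) ^ |d| := by
        rw [hC₀]
        rw [show (4:ℝ) * 2 ^ |d| * Real.exp (3 * π) * (M + 1) * (1 / ((k:ℝ) * Real.sqrt n)) *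
            ((n : ℝ) / k) ^ |d|
          = 2 ^ |d| * ((n:ℝ)/k) ^ |d| * Real.exp (3*π) * (M+1) * (4/((k:ℝ)*Real.sqrt n)) from by
            ring]
        refine mul_le_mul_of_nonneg_right (mul_le_mul_of_nonneg_left (by linarith)
          (by positivity)) (by positivity)
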